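/- Let G be an abelian group that is bounded×cobounded, and let H be a finitely generated subgroup of G. Then the torsion subgroup of G/H is supported at a finite set of primes; that is, there are only finitely many primes p such that G/H has a nontrivial element of order p. -/

import Mathlib

/-- An abelian group is bounded if it is annihilated by some positive integer. -/
def IsBoundedGroup (B : Type u) [AddCommGroup B] : Prop :=
  ∃ n : ℕ, 0 < n ∧ ∀ x : B, n • x = 0

/-- An abelian group is cobounded if, for some `n ≥ 1`, it embeds into a direct sum of
copies of `ℤ[1/n]`. -/
def IsCoboundedGroup (C : Type u) [AddCommGroup C] : Prop :=
  ∃ n : ℕ, 0 < n ∧ ∃ (ι : Type u) (f : C →+ (ι →₀ Localization.Away (n : ℤ))),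
    Function.Injective f

/-- An abelian group is bounded×cobounded if it is isomorphic to the product of a
bounded group and a cobounded group. -/
def IsBoundedCobounded (G : Type u) [AddCommGroup G] : Prop :=
  ∃ (B C : Type u) (_ : AddCommGroup B) (_ : AddCommGroup C),
    IsBoundedGroup B ∧ IsCoboundedGroup C ∧ Nonempty (G ≃+ B × C)

/-- A finitely generated torsion submodule over a domain has a nonzero annihilator. -/
lemma BddCobdd.exists_ann {R M : Type*} [CommRing R] [IsDomain R] [AddCommGroup M] [Module R M]
    (T : Submodule R M) (hT : T.FG)
    (htors : ∀ x ∈ T, ∃ r : R, r ≠ 0 ∧ r • x = 0) :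
    ∃ d : R, d ≠ 0 ∧ ∀ x ∈ T, d • x = 0 := by
  classical
  obtain ⟨s, hs⟩ := hT
  have hx : ∀ x : M, ∃ r : R, r ≠ 0 ∧ (x ∈ T → r • x = 0) := by
    intro x
    by_cases hxT : x ∈ T
    · obtain ⟨r, hr0, hr⟩ := htors x hxT
      exact ⟨r, hr0, fun _ => hr⟩
    · exact ⟨1, one_ne_zero, fun h => absurd h hxT⟩
  choose f hf0 hf using hx
  refine ⟨∏ x ∈ s, f x, Finset.prod_ne_zero_iff.2 fun x _ => hf0 x, ?_⟩
  have hmem : ∀ x ∈ s, (∏ y ∈ s, f y) • x = 0 := by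
    intro x hxs
    rw [← Finset.prod_erase_mul s f hxs, mul_smul, hf x (hs ▸ Submodule.subset_span hxs),
      smul_zero]
  intro x hxT
  rw [← hs] at hxT
  induction hxT using Submodule.span_induction with
  | mem z hz => exact hmem z hz
  | zero => exact smul_zero _
  | add z w _ _ hz hw => rw [smul_add, hz, hw, add_zero]
  | smul r z _ hz => rw [smul_comm, hz, smul_zero]

/-- Any element of a finite submodule `D` whose image in `M ⧸ KR` is torsion is killed into
`KR` by a single nonzero ring element `d`. -/
lemma BddCobdd.torsion_ann {R M : Type*} [CommRing R] [IsDomain R] [IsNoetherianRing R]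
    [AddCommGroup M] [Module R M] (D KR : Submodule R M) [Module.Finite R ↥D] :
    ∃ d : R, d ≠ 0 ∧ ∀ y, y ∈ D → (∃ r : R, r ≠ 0 ∧ r • y ∈ KR) → d • y ∈ KR := by
  obtain ⟨d, hd0, hdann⟩ :=
    BddCobdd.exists_ann (Submodule.torsion R (↥D ⧸ KR.comap D.subtype))
      (IsNoetherian.noetherian _)
      (by
        intro x hx
        rw [Submodule.mem_torsion_iff] at hx
        obtain ⟨⟨r, hr⟩, hrx⟩ := hx
        exact ⟨r, mem_nonZeroDivisors_iff_ne_zero.1 hr, by rwa [Submonoid.smul_def] at hrx⟩)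
  refine ⟨d, hd0, ?_⟩
  rintro y hy ⟨r, hr0, hry⟩
  have h1 : r • (Submodule.Quotient.mk (⟨y, hy⟩ : D) : ↥D ⧸ KR.comap D.subtype) = 0 := by
    rw [← Submodule.Quotient.mk_smul, Submodule.Quotient.mk_eq_zero, Submodule.mem_comap]
    exact hry
  have h2 := hdann (Submodule.Quotient.mk (⟨y, hy⟩ : D)) ((Submodule.mem_torsion_iff _).2
    ⟨⟨r, mem_nonZeroDivisors_of_ne_zero hr0⟩, by rwa [Submonoid.smul_def]⟩)
  rwa [← Submodule.Quotient.mk_smul, Submodule.Quotient.mk_eq_zero, Submodule.mem_comap] at h2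

/-- Key lemma: in a direct sum of copies of a Noetherian domain `R` in which every element
becomes integral after multiplication by a power of `m`, the torsion of the quotient by a
finitely generated subgroup is supported at finitely many primes. -/
lemma BddCobdd.key' {ι R : Type*} [CommRing R] [IsDomain R] [IsNoetherianRing R]
    (m : ℕ) (hm : 0 < m) (hinj : Function.Injective (Int.cast : ℤ → R))
    (hsur : ∀ r : R, ∃ (a : ℤ) (t : ℕ), ((m : ℤ) ^ t) • r = ((a : R)))
    (K' : AddSubgroup (ι →₀ R)) (hK' : K'.FG) :
    ∃ a : ℕ, 0 < a ∧ ∀ p : ℕ, p.Prime → ∀ y, y ∉ K' → p • y ∈ K' → p ∣ m * a := by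
  classical
  have hcast0 : ∀ k : ℤ, k ≠ 0 → ((k : R) ≠ 0) := by
    intro k hk h0
    exact hk (hinj (by rw [h0, Int.cast_zero]))
  have hm0 : (m : ℤ) ≠ 0 := Int.natCast_ne_zero.2 hm.ne'
  obtain ⟨s, hs⟩ := hK'
  have hKsub : ∀ z ∈ K', z ∈ Submodule.span R (↑s : Set (ι →₀ R)) := by
    intro z hz
    rw [← hs] at hz
    exact AddSubgroup.closure_le
      (K := (Submodule.span R (↑s : Set (ι →₀ R))).toAddSubgroup) |>.2
      (fun w hw => Submodule.subset_span hw) hz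
  have hback : ∀ z ∈ Submodule.span R (↑s : Set (ι →₀ R)),
      ∃ t : ℕ, ((m : ℤ) ^ t) • z ∈ K' := by
    intro z hz
    induction hz using Submodule.span_induction with
    | mem w hw =>
      exact ⟨0, by rw [pow_zero, one_smul]; exact hs ▸ AddSubgroup.subset_closure hw⟩
    | zero => exact ⟨0, by rw [smul_zero]; exact K'.zero_mem⟩
    | add z w _ _ hz hw =>
      obtain ⟨t₁, h₁⟩ := hz
      obtain ⟨t₂, h₂⟩ := hw
      refine ⟨t₁ + t₂, ?_⟩
      rw [smul_add]
      refine K'.add_mem ?_ ?_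
      · rw [pow_add, mul_comm, mul_smul]
        exact zsmul_mem h₁ _
      · rw [pow_add, mul_smul]
        exact zsmul_mem h₂ _
    | smul r z _ hz =>
      obtain ⟨t, ht⟩ := hz
      obtain ⟨a, t', hat'⟩ := hsur r
      refine ⟨t' + t, ?_⟩
      have hcalc : ((m : ℤ) ^ (t' + t)) • (r • z) = a • (((m : ℤ) ^ t) • z) := by
        rw [pow_add, mul_smul, smul_comm ((m : ℤ) ^ t) r z, ← smul_assoc, hat',
          Int.cast_smul_eq_zsmul]
      rw [hcalc]
      exact zsmul_mem ht _
  set S : Finset ι := s.sup Finsupp.support with hSdef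
  have hKRD : Submodule.span R (↑s : Set (ι →₀ R)) ≤ Finsupp.supported R R (↑S : Set ι) := by
    rw [Submodule.span_le]
    intro x hx
    rw [SetLike.mem_coe, Finsupp.mem_supported]
    exact Finset.coe_subset.2 (Finset.le_sup hx)
  haveI : Module.Finite R ↥(Finsupp.supported R R (↑S : Set ι)) := by
    rw [Module.Finite.iff_fg, Finsupp.supported_eq_span_single]
    exact Submodule.fg_def.2 ⟨_, Set.Finite.image _ S.finite_toSet, rfl⟩
  obtain ⟨d, hd0, hdann⟩ := BddCobdd.torsion_ann (Finsupp.supported R R (↑S : Set ι))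
    (Submodule.span R (↑s : Set (ι →₀ R)))
  obtain ⟨a, t, hat⟩ := hsur d
  have ha0 : a ≠ 0 := by
    intro h
    rw [h, Int.cast_zero] at hat
    have h2 : (((m : ℤ) ^ t : ℤ) : R) * d = 0 := by rw [← zsmul_eq_mul, hat]
    rcases mul_eq_zero.1 h2 with h' | h'
    · exact hcast0 _ (pow_ne_zero t hm0) h'
    · exact hd0 h'
  refine ⟨a.natAbs, Int.natAbs_pos.2 ha0, ?_⟩
  intro p hp y hy hpy
  have hpz : (p : ℤ) • y ∈ K' := by rw [natCast_zsmul]; exact hpy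
  by_cases hyKR : y ∈ Submodule.span R (↑s : Set (ι →₀ R))
  · obtain ⟨t', ht'⟩ := hback y hyKR
    have hpm : p ∣ m := by
      by_contra hpm
      have hcop : IsCoprime (p : ℤ) ((m : ℤ) ^ t') := by
        apply IsCoprime.pow_right
        rw [Int.isCoprime_iff_gcd_eq_one]
        simpa [Int.gcd, Int.natAbs_natCast] using (Nat.Prime.coprime_iff_not_dvd hp).2 hpm
      obtain ⟨u, v, huv⟩ := hcop
      have hyeq : y = u • ((p : ℤ) • y) + v • (((m : ℤ) ^ t') • y) := by
        rw [← mul_smul, ← mul_smul, ← add_smul, huv, one_smul]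
      exact absurd (hyeq ▸ K'.add_mem (zsmul_mem hpz u) (zsmul_mem ht' v)) hy
    exact Dvd.dvd.mul_right hpm _
  · have hpyKR : (p : ℤ) • y ∈ Submodule.span R (↑s : Set (ι →₀ R)) := hKsub _ hpz
    have hp0 : ((p : ℤ) : R) ≠ 0 := hcast0 _ (Int.natCast_ne_zero.2 hp.ne_zero)
    have hyD : y ∈ Finsupp.supported R R (↑S : Set ι) := by
      rw [Finsupp.mem_supported']
      intro i hi
      have h1 : ((p : ℤ) • y) i = 0 := (Finsupp.mem_supported' R _).1 (hKRD hpyKR) i hi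
      rw [Finsupp.smul_apply, zsmul_eq_mul] at h1
      rcases mul_eq_zero.1 h1 with h' | h'
      · exact absurd h' hp0
      · exact h'
    have hdy : d • y ∈ Submodule.span R (↑s : Set (ι →₀ R)) := by
      refine hdann y hyD ⟨((p : ℤ) : R), hp0, ?_⟩
      rw [Int.cast_smul_eq_zsmul]
      exact hpyKR
    have hay : (a : ℤ) • y ∈ Submodule.span R (↑s : Set (ι →₀ R)) := by
      have heq : (a : ℤ) • y = ((m : ℤ) ^ t) • (d • y) := by
        rw [← Int.cast_smul_eq_zsmul R a, ← hat, smul_assoc]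
      rw [heq]
      exact zsmul_mem hdy _
    have hpa : p ∣ a.natAbs := by
      by_contra hpa
      have hcop : IsCoprime (p : ℤ) a := by
        rw [Int.isCoprime_iff_gcd_eq_one]
        simpa [Int.gcd, Int.natAbs_natCast] using (Nat.Prime.coprime_iff_not_dvd hp).2 hpa
      obtain ⟨u, v, huv⟩ := hcop
      have hyeq : y = u • ((p : ℤ) • y) + v • ((a : ℤ) • y) := by
        rw [← mul_smul, ← mul_smul, ← add_smul, huv, one_smul]
      exact absurd (hyeq ▸ add_mem (zsmul_mem hpyKR u) (zsmul_mem hay v)) hyKR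
    exact Dvd.dvd.mul_left hpa m

/-- The key lemma, instantiated for `ℤ[1/m]`. -/
lemma BddCobdd.key {m : ℕ} (hm : 0 < m) {ι : Type u}
    (K' : AddSubgroup (ι →₀ Localization.Away (m : ℤ))) (hK' : K'.FG) :
    ∃ a : ℕ, 0 < a ∧ ∀ p : ℕ, p.Prime → ∀ y, y ∉ K' → p • y ∈ K' → p ∣ m * a := by
  have hm0 : (m : ℤ) ≠ 0 := Int.natCast_ne_zero.2 hm.ne'
  have hle : Submonoid.powers (m : ℤ) ≤ nonZeroDivisors ℤ := by
    rintro x ⟨k, rfl⟩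
    exact mem_nonZeroDivisors_of_ne_zero (pow_ne_zero _ hm0)
  haveI : IsDomain (Localization.Away (m : ℤ)) := IsLocalization.isDomain_localization hle
  haveI : IsNoetherianRing (Localization.Away (m : ℤ)) :=
    IsLocalization.isNoetherianRing (Submonoid.powers (m : ℤ))
      (Localization.Away (m : ℤ)) inferInstance
  have hinj : Function.Injective (Int.cast : ℤ → Localization.Away (m : ℤ)) := by
    have h1 := IsLocalization.injective (Localization.Away (m : ℤ)) hle
    intro x y hxy
    apply h1
    rwa [eq_intCast, eq_intCast]
  refine BddCobdd.key' m hm hinj ?_ K' hK'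
  intro r
  obtain ⟨⟨a, mt⟩, hsurj⟩ := IsLocalization.surj (M := Submonoid.powers ((m : ℤ))) r
  obtain ⟨t, ht⟩ := mt.2
  refine ⟨a, t, ?_⟩
  calc ((m : ℤ) ^ t) • r
      = (((m : ℤ) ^ t : ℤ) : Localization.Away (m : ℤ)) * r := zsmul_eq_mul _ _
    _ = algebraMap ℤ _ ((m : ℤ) ^ t) * r := by
        rw [eq_intCast (algebraMap ℤ (Localization.Away (m : ℤ)))]
    _ = r * algebraMap ℤ _ (mt : ℤ) := by
        have ht' : ((m : ℤ)) ^ t = ((mt : ℤ)) := ht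
        rw [ht', mul_comm]
    _ = algebraMap ℤ _ a := hsurj
    _ = ((a : Localization.Away (m : ℤ))) := eq_intCast _ a

/-- If `G` is a bounded×cobounded abelian group and `H` a finitely generated subgroup,
then the torsion of `G/H` is supported at finitely many primes. -/
theorem stmt10 {G : Type u} [AddCommGroup G] (h : IsBoundedCobounded G)
    (H : AddSubgroup G) (hH : H.FG) :
    {p : ℕ | p.Prime ∧ ∃ x : G ⧸ H, x ≠ 0 ∧ addOrderOf x = p}.Finite := by
  classical
  obtain ⟨B, C, iB, iC, ⟨n, hn, hB⟩, ⟨m, hm, ι, f, hf⟩, ⟨e⟩⟩ := h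
  set π : G →+ C := (AddMonoidHom.snd B C).comp e.toAddMonoidHom with hπdef
  set φ : G →+ (ι →₀ Localization.Away (m : ℤ)) := f.comp π with hφdef
  have hK'fg : (AddSubgroup.map (N := ι →₀ Localization.Away (m : ℤ)) φ H).FG := by
    obtain ⟨s, hs⟩ := hH
    exact ⟨s.image ⇑φ, by rw [Finset.coe_image, ← AddMonoidHom.map_closure, hs]⟩
  obtain ⟨a, ha, hkey⟩ := BddCobdd.key hm (AddSubgroup.map (N := ι →₀ Localization.Away (m : ℤ)) φ H) hK'fg
  have hne : n * (m * a) ≠ 0 := by positivity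
  refine Set.Finite.subset ((Nat.divisors (n * (m * a))).finite_toSet) ?_
  rintro p ⟨hp, x, hx0, hxp⟩
  rw [Finset.mem_coe, Nat.mem_divisors]
  refine ⟨?_, hne⟩
  obtain ⟨g, rfl⟩ := QuotientAddGroup.mk_surjective x
  have hgH : g ∉ H := fun hg => hx0 ((QuotientAddGroup.eq_zero_iff g).2 hg)
  have hpsmul : p • ((g : G ⧸ H)) = 0 := by
    rw [← hxp]; exact addOrderOf_nsmul_eq_zero _
  have hpg : p • g ∈ H := by
    rw [← QuotientAddGroup.eq_zero_iff (p • g), QuotientAddGroup.mk_nsmul]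
    exact hpsmul
  by_cases hpn : p ∣ n
  · exact hpn.mul_right _
  · have hφg : φ g ∉ AddSubgroup.map (N := ι →₀ Localization.Away (m : ℤ)) φ H := by
      rintro ⟨h', hh', hφh⟩
      have hπeq : π h' = π g := hf hφh
      have h0 : (e (g - h')).2 = 0 := by
        have : π (g - h') = 0 := by rw [map_sub, hπeq, sub_self]
        exact this
      have hns : n • (g - h') = 0 := by
        apply e.injective
        rw [map_nsmul, map_zero]
        have : n • e (g - h') = (n • (e (g - h')).1, n • (e (g - h')).2) := rfl
        rw [this, h0, hB, smul_zero]
        rfl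
      have hnH : n • g ∈ H := by
        have h1 : n • g - n • h' = 0 := by rw [← smul_sub, hns]
        rw [sub_eq_zero.1 h1]
        exact nsmul_mem hh' n
      have hnx : n • ((g : G ⧸ H)) = 0 := by
        rw [← QuotientAddGroup.mk_nsmul, QuotientAddGroup.eq_zero_iff]
        exact hnH
      exact hpn (hxp ▸ addOrderOf_dvd_of_nsmul_eq_zero hnx)
    have hpφ : p • φ g ∈ AddSubgroup.map (N := ι →₀ Localization.Away (m : ℤ)) φ H := ⟨p • g, hpg, by rw [map_nsmul]⟩
    exact (hkey p hp (φ g) hφg hpφ).mul_left n
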